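/- Fix 0 ≤ s ≤ 1 and set V_{n,s} = U_n + √s·U_{n−1} (with U_{−1} ≡ 0). Then the polynomials V_{n,s} are orthogonal with respect to the measure on [−1,1] with density (2/π)·√(1−x²)/((1+s) + 2√s·x): ∫_{-1}^{1} V_{n,s}(x)·V_{n',s}(x)·(2/π)·(√(1−x²)/((1+s)+2√s·x)) dx = 0 whenever n ≠ n'. -/

import Mathlib

set_option maxHeartbeats 1000000

open Polynomial Polynomial.Chebyshev intervalIntegral Real MeasureTheory Set

namespace ChebyshevMPAux

lemma Dpos (t : ℝ) (ht0 : 0 ≤ t) (ht1 : t < 1) (θ : ℝ) : 0 < 1 + t^2 + 2*t*Real.cos θ := by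
  nlinarith [Real.neg_one_le_cos θ, Real.cos_le_one θ]

lemma hasDerivAt_Phi (t : ℝ) (ht0 : 0 ≤ t) (ht1 : t < 1) {θ : ℝ} (h0 : 0 < θ) (hπ : θ < π) :
    HasDerivAt (fun θ : ℝ => Real.arccos ((Real.cos θ + t) / Real.sqrt (1 + t^2 + 2*t*Real.cos θ)))
      ((1 + t*Real.cos θ) / (1 + t^2 + 2*t*Real.cos θ)) θ := by
  have hD : 0 < 1 + t^2 + 2*t*Real.cos θ := Dpos t ht0 ht1 θ
  set D : ℝ := 1 + t^2 + 2*t*Real.cos θ with hDdef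
  have hsθ : 0 < Real.sin θ := Real.sin_pos_of_pos_of_lt_pi h0 hπ
  have hsD : 0 < Real.sqrt D := Real.sqrt_pos.2 hD
  have hsq : Real.sqrt D ^ 2 = D := Real.sq_sqrt hD.le
  -- derivative of D as function of θ
  have hDderiv : HasDerivAt (fun θ : ℝ => 1 + t^2 + 2*t*Real.cos θ) (2*t*(-Real.sin θ)) θ := by
    simpa using ((Real.hasDerivAt_cos θ).const_mul (2*t)).const_add (1+t^2)
  have hgderiv : HasDerivAt (fun θ : ℝ => Real.sqrt (1 + t^2 + 2*t*Real.cos θ))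
      ((2*t*(-Real.sin θ)) / (2 * Real.sqrt (1 + t^2 + 2*t*Real.cos θ))) θ :=
    hDderiv.sqrt hD.ne'
  have hfderiv : HasDerivAt (fun θ : ℝ => Real.cos θ + t) (-Real.sin θ) θ :=
    (Real.hasDerivAt_cos θ).add_const t
  have huderiv : HasDerivAt (fun θ : ℝ => (Real.cos θ + t) / Real.sqrt (1 + t^2 + 2*t*Real.cos θ))
      (((-Real.sin θ) * Real.sqrt D - (Real.cos θ + t) * ((2*t*(-Real.sin θ)) / (2 * Real.sqrt D))) / (Real.sqrt D)^2) θ :=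
    hfderiv.div hgderiv hsD.ne'
  set u : ℝ := (Real.cos θ + t) / Real.sqrt D with hu
  have h1u : 1 - u^2 = Real.sin θ^2 / D := by
    rw [hu, div_pow, hsq]
    have : (Real.cos θ + t)^2 = D - Real.sin θ^2 := by
      have := Real.sin_sq_add_cos_sq θ
      nlinarith
    rw [this]
    field_simp
    ring
  have hu1 : u < 1 := by
    nlinarith [h1u, sq_nonneg u, div_pos (pow_pos hsθ 2) hD]
  have hu2 : -1 < u := by
    nlinarith [h1u, div_pos (pow_pos hsθ 2) hD]
  have hsqrt1u : Real.sqrt (1 - u^2) = Real.sin θ / Real.sqrt D := by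
    rw [h1u, Real.sqrt_div (sq_nonneg _), Real.sqrt_sq hsθ.le]
  have harccos := (Real.hasDerivAt_arccos hu2.ne' hu1.ne).comp θ huderiv
  refine harccos.congr_deriv (Eq.symm ?_)
  rw [hsqrt1u]
  clear_value u D
  generalize hS : Real.sqrt D = s at *
  subst hsq
  have := hsθ.ne'
  have := hsD.ne'
  field_simp
  linear_combination -hDdef

lemma contD (t : ℝ) : Continuous (fun θ : ℝ => 1 + t^2 + 2*t*Real.cos θ) := by continuity

lemma integrable_cosk_div_D (t : ℝ) (ht0 : 0 ≤ t) (ht1 : t < 1) (c a b : ℝ) :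
    IntervalIntegrable (fun θ : ℝ => Real.cos (c*θ) / (1 + t^2 + 2*t*Real.cos θ)) volume a b := by
  apply Continuous.intervalIntegrable
  exact (Real.continuous_cos.comp (continuous_const.mul continuous_id)).div (contD t)
    (fun θ => (Dpos t ht0 ht1 θ).ne')

lemma I0 (t : ℝ) (ht0 : 0 ≤ t) (ht1 : t < 1) :
    ∫ θ in (0:ℝ)..π, 1 / (1 + t^2 + 2*t*Real.cos θ) = π / (1 - t^2) := by
  have h1t : (0:ℝ) < 1 - t^2 := by nlinarith
  set Φ : ℝ → ℝ := fun θ =>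
    (2 * Real.arccos ((Real.cos θ + t) / Real.sqrt (1 + t^2 + 2*t*Real.cos θ)) - θ) / (1 - t^2)
    with hΦ
  have key : ∫ θ in (0:ℝ)..π, 1 / (1 + t^2 + 2*t*Real.cos θ) = Φ π - Φ 0 := by
    apply intervalIntegral.integral_eq_sub_of_hasDeriv_right_of_le Real.pi_pos.le
    · apply ContinuousOn.div_const
      apply ContinuousOn.sub _ continuousOn_id
      exact continuousOn_const.mul (Real.continuous_arccos.comp_continuousOn
        (((Real.continuous_cos.add continuous_const).continuousOn).div
          ((contD t).sqrt.continuousOn)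
          (fun θ _ => (Real.sqrt_pos.2 (Dpos t ht0 ht1 θ)).ne')))
    · intro θ hθ
      have h := (((hasDerivAt_Phi t ht0 ht1 hθ.1 hθ.2).const_mul 2).sub
        (hasDerivAt_id θ)).div_const (1 - t^2)
      have hD := Dpos t ht0 ht1 θ
      have : (2 * ((1 + t*Real.cos θ) / (1 + t^2 + 2*t*Real.cos θ)) - 1) / (1 - t^2)
          = 1 / (1 + t^2 + 2*t*Real.cos θ) := by
        field_simp
        ring
      rw [← this]
      exact h.hasDerivWithinAt
    · apply Continuous.intervalIntegrable
      exact continuous_const.div (contD t) (fun θ => (Dpos t ht0 ht1 θ).ne')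
  rw [key, hΦ]
  have e0 : Real.sqrt (1 + t^2 + 2*t*1) = 1 + t := by
    rw [show 1 + t^2 + 2*t*1 = (1+t)^2 by ring, Real.sqrt_sq (by linarith)]
  have eπ : Real.sqrt (1 + t^2 + 2*t*(-1)) = 1 - t := by
    rw [show 1 + t^2 + 2*t*(-1) = (1-t)^2 by ring, Real.sqrt_sq (by linarith)]
  simp only [Real.cos_zero, Real.cos_pi, e0, eπ]
  rw [show (1 + t)/(1+t) = (1:ℝ) by field_simp,
    show (-1 + t)/(1-t) = (-1:ℝ) by rw [div_eq_iff (by linarith : (1:ℝ)-t ≠ 0)]; ring]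
  rw [Real.arccos_one, Real.arccos_neg_one]
  field_simp
  ring

lemma integral_cos_int (k : ℤ) (hk : k ≠ 0) :
    ∫ θ in (0:ℝ)..π, Real.cos (k*θ) = 0 := by
  have hk' : (k:ℝ) ≠ 0 := Int.cast_ne_zero.2 hk
  have : ∀ θ ∈ Set.uIcc (0:ℝ) π, HasDerivAt (fun θ : ℝ => Real.sin (k*θ) / k) (Real.cos (k*θ)) θ := by
    intro θ _
    have h := ((Real.hasDerivAt_sin ((k:ℝ)*θ)).comp θ
      ((hasDerivAt_id θ).const_mul (k:ℝ))).div_const (k:ℝ)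
    simpa [mul_comm, mul_div_assoc, mul_div_cancel_left₀ _ hk'] using h
  rw [intervalIntegral.integral_eq_sub_of_hasDerivAt this (by
    apply Continuous.intervalIntegrable; continuity)]
  simp [Real.sin_int_mul_pi]

lemma contCos (c : ℝ) : Continuous (fun θ : ℝ => Real.cos (c*θ)) :=
  Real.continuous_cos.comp (continuous_const.mul continuous_id)

lemma integral_cos_nat (k : ℕ) (hk : k ≠ 0) :
    ∫ θ in (0:ℝ)..π, Real.cos ((k:ℝ)*θ) = 0 := by
  have h := integral_cos_int (k:ℤ) (by exact_mod_cast hk)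
  push_cast at h
  exact h

lemma Ik_step (t : ℝ) (ht0 : 0 ≤ t) (ht1 : t < 1) (ht : t ≠ 0) (k : ℕ)
    (ih : ∫ θ in (0:ℝ)..π, Real.cos ((k:ℝ)*θ) / (1 + t^2 + 2*t*Real.cos θ) = π * (-t)^k / (1 - t^2))
    (ih1 : ∫ θ in (0:ℝ)..π, Real.cos (((k:ℝ)+1)*θ) / (1 + t^2 + 2*t*Real.cos θ) = π * (-t)^(k+1) / (1 - t^2)) :
    ∫ θ in (0:ℝ)..π, Real.cos (((k:ℝ)+2)*θ) / (1 + t^2 + 2*t*Real.cos θ) = π * (-t)^(k+2) / (1 - t^2) := by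
  have h1t : (0:ℝ) < 1 - t^2 := by nlinarith
  have hint : ∀ (c:ℝ), IntervalIntegrable
      (fun θ : ℝ => Real.cos (c*θ) / (1 + t^2 + 2*t*Real.cos θ)) volume 0 π :=
    fun c => integrable_cosk_div_D t ht0 ht1 c 0 π
  have e2 : ∀ θ : ℝ, Real.cos (((k:ℝ)+2)*θ) / (1 + t^2 + 2*t*Real.cos θ)
      = ((1/t) * Real.cos (((k:ℝ)+1)*θ)
        - ((1+t^2)/t) * (Real.cos (((k:ℝ)+1)*θ) / (1 + t^2 + 2*t*Real.cos θ)))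
        - Real.cos ((k:ℝ)*θ) / (1 + t^2 + 2*t*Real.cos θ) := by
    intro θ
    have hD := Dpos t ht0 ht1 θ
    have hc2 : Real.cos (((k:ℝ)+2)*θ)
        = 2 * Real.cos (((k:ℝ)+1)*θ) * Real.cos θ - Real.cos ((k:ℝ)*θ) := by
      rw [show ((k:ℝ)+2)*θ = ((k:ℝ)+1)*θ + θ by ring, show (k:ℝ)*θ = ((k:ℝ)+1)*θ - θ by ring,
        Real.cos_add, Real.cos_sub]
      ring
    rw [hc2]
    have hD' : 1 + t^2 + 2*Real.cos θ*t ≠ 0 := by linarith [hD, mul_comm t (Real.cos θ)]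
    field_simp
    ring
  rw [intervalIntegral.integral_congr (fun θ _ => e2 θ)]
  rw [intervalIntegral.integral_sub (IntervalIntegrable.sub
      (((contCos _).intervalIntegrable _ _).const_mul _) ((hint _).const_mul _)) (hint _)]
  rw [intervalIntegral.integral_sub (((contCos _).intervalIntegrable _ _).const_mul _)
      ((hint _).const_mul _)]
  rw [intervalIntegral.integral_const_mul, intervalIntegral.integral_const_mul]
  rw [ih, ih1]
  rw [show (((k:ℝ)+1)) = (((k+1:ℕ)):ℝ) by push_cast; ring, integral_cos_nat (k+1) k.succ_ne_zero]
  field_simp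
  ring

lemma Ik (t : ℝ) (ht0 : 0 ≤ t) (ht1 : t < 1) (k : ℕ) :
    ∫ θ in (0:ℝ)..π, Real.cos (k*θ) / (1 + t^2 + 2*t*Real.cos θ) = π * (-t)^k / (1 - t^2) := by
  have h1t : (0:ℝ) < 1 - t^2 := by nlinarith
  rcases eq_or_lt_of_le ht0 with h0 | h0
  · -- t = 0
    subst h0
    have hsimp : ∀ θ : ℝ, Real.cos (k*θ) / (1 + (0:ℝ)^2 + 2*0*Real.cos θ) = Real.cos (k*θ) := by
      intro θ; norm_num
    rw [intervalIntegral.integral_congr (fun θ _ => hsimp θ)]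
    rcases Nat.eq_zero_or_pos k with hk | hk
    · subst hk; norm_num [Real.pi_pos.le]
    · rw [show ((k:ℝ)) = ((k:ℤ):ℝ) by push_cast; ring] at *
      rw [integral_cos_int k (by exact_mod_cast hk.ne')]
      rw [show ((-0:ℝ))^k = 0 by simp [zero_pow hk.ne']]
      norm_num
  -- t > 0 case
  induction k using Nat.twoStepInduction with
  | more k ih ih1 =>
    have hih1 : ∫ θ in (0:ℝ)..π, Real.cos (((k:ℝ)+1)*θ) / (1 + t^2 + 2*t*Real.cos θ)
        = π * (-t)^(k+1) / (1 - t^2) := by push_cast at ih1 ⊢; exact ih1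
    have h := Ik_step t ht0 ht1 h0.ne' k ih hih1
    push_cast at h ⊢
    exact h
  | zero => simpa using I0 t ht0 ht1
  | one =>
    -- I1
    have e1 : ∀ θ : ℝ, Real.cos ((1:ℕ)*θ) / (1 + t^2 + 2*t*Real.cos θ)
        = (1/(2*t)) * (1 - (1+t^2) * (1 / (1 + t^2 + 2*t*Real.cos θ))) := by
      intro θ
      have hD := Dpos t ht0 ht1 θ
      rw [Nat.cast_one, one_mul]
      have hD' : 1 + t^2 + Real.cos θ*t*2 ≠ 0 := by linarith [hD, mul_comm t (Real.cos θ)]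
      field_simp
      ring
    rw [intervalIntegral.integral_congr (fun θ _ => e1 θ)]
    rw [intervalIntegral.integral_const_mul]
    rw [intervalIntegral.integral_sub intervalIntegrable_const (by
      apply IntervalIntegrable.const_mul
      apply Continuous.intervalIntegrable
      exact continuous_const.div (contD t) (fun θ => (Dpos t ht0 ht1 θ).ne'))]
    rw [intervalIntegral.integral_const_mul, I0 t ht0 ht1]
    simp only [intervalIntegral.integral_const, smul_eq_mul, sub_zero, mul_one]
    field_simp
    ring

lemma cos_image_Ioo : Real.cos '' Set.Ioo 0 π = Set.Ioo (-1) 1 := by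
  ext x
  constructor
  · rintro ⟨θ, ⟨h0, hπ⟩, rfl⟩
    have hmem : θ ∈ Set.Icc 0 π := ⟨h0.le, hπ.le⟩
    constructor
    · have := Real.strictAntiOn_cos hmem (Set.right_mem_Icc.2 Real.pi_pos.le) hπ
      simpa using this
    · have := Real.strictAntiOn_cos (Set.left_mem_Icc.2 Real.pi_pos.le) hmem h0
      simpa using this
  · rintro ⟨h1, h2⟩
    refine ⟨Real.arccos x, ⟨Real.arccos_pos.2 h2, ?_⟩, Real.cos_arccos h1.le h2.le⟩
    rcases lt_or_eq_of_le (Real.arccos_le_pi x) with h | h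
    · exact h
    · exfalso
      have : x = -1 := by
        rw [← Real.cos_arccos h1.le h2.le, h, Real.cos_pi]
      linarith
lemma subst_cos (g : ℝ → ℝ) :
    ∫ x in (-1:ℝ)..1, g x = ∫ θ in (0:ℝ)..π, Real.sin θ * g (Real.cos θ) := by
  rw [intervalIntegral.integral_of_le (by norm_num : (-1:ℝ) ≤ 1),
    MeasureTheory.integral_Ioc_eq_integral_Ioo,
    intervalIntegral.integral_of_le Real.pi_pos.le,
    MeasureTheory.integral_Ioc_eq_integral_Ioo,
    ← cos_image_Ioo,
    MeasureTheory.integral_image_eq_integral_abs_deriv_smul measurableSet_Ioo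
      (fun θ _ => (Real.hasDerivAt_cos θ).hasDerivWithinAt)
      (Real.injOn_cos.mono Set.Ioo_subset_Icc_self) g]
  apply MeasureTheory.setIntegral_congr_fun measurableSet_Ioo
  intro θ hθ
  have hs : 0 < Real.sin θ := Real.sin_pos_of_pos_of_lt_pi hθ.1 hθ.2
  simp only [smul_eq_mul, abs_neg, abs_of_pos hs]

lemma trig_core (A B θ t : ℝ) :
    (Real.sin (A+θ) + t * Real.sin A) * (Real.sin (B+θ) + t * Real.sin B)
      = (1/2)*(1+t^2+2*t*Real.cos θ)*Real.cos (A-B)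
        - (1/2)*(Real.cos (A+B+2*θ) + 2*t*Real.cos (A+B+θ) + t^2*Real.cos (A+B)) := by
  simp only [Real.sin_add, Real.cos_add, Real.cos_sub, Real.sin_sub, two_mul]
  linear_combination ((Real.cos A * Real.cos B + Real.sin A * Real.sin B)/2) * (Real.sin_sq_add_cos_sq θ)

lemma core (t a b θ P Q : ℝ) (hs : Real.sin θ ≠ 0) (hD : (1+t^2+2*t*Real.cos θ) ≠ 0)
    (hP : P * Real.sin θ = Real.sin ((a+1)*θ) + t * Real.sin (a*θ))
    (hQ : Q * Real.sin θ = Real.sin ((b+1)*θ) + t * Real.sin (b*θ)) :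
    Real.sin θ * (P * Q * ((2/π) * (Real.sin θ/(1+t^2+2*t*Real.cos θ))))
      = (1/π) * (Real.cos ((a-b)*θ)
          - (Real.cos ((a+b+2)*θ) + 2*t*Real.cos ((a+b+1)*θ) + t^2*Real.cos ((a+b)*θ))
            / (1+t^2+2*t*Real.cos θ)) := by
  have hcore : (Real.sin ((a+1)*θ) + t*Real.sin (a*θ)) * (Real.sin ((b+1)*θ) + t*Real.sin (b*θ))
      = (1/2)*(1+t^2+2*t*Real.cos θ)*Real.cos ((a-b)*θ)
        - (1/2)*(Real.cos ((a+b+2)*θ) + 2*t*Real.cos ((a+b+1)*θ) + t^2*Real.cos ((a+b)*θ)) := by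
    have h := trig_core (a*θ) (b*θ) θ t
    rw [show (a+1)*θ = a*θ+θ by ring, show (b+1)*θ = b*θ+θ by ring,
      show (a-b)*θ = a*θ - b*θ by ring, show (a+b+2)*θ = a*θ+b*θ+2*θ by ring,
      show (a+b+1)*θ = a*θ+b*θ+θ by ring, show (a+b)*θ = a*θ+b*θ by ring]
    exact h
  have h1 : Real.sin θ * (P * Q * ((2/π) * (Real.sin θ/(1+t^2+2*t*Real.cos θ))))
      = (2/π) * ((P*Real.sin θ) * (Q*Real.sin θ)) / (1+t^2+2*t*Real.cos θ) := by ring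
  rw [h1, hP, hQ, hcore]
  field_simp

lemma Vsin (t : ℝ) (V : ℕ → ℝ → ℝ)
    (hV : ∀ k x, V k x =
      (U ℝ k).eval x + t * (if k = 0 then 0 else (U ℝ ((k : ℤ) - 1)).eval x))
    (k : ℕ) (θ : ℝ) :
    V k (Real.cos θ) * Real.sin θ
      = Real.sin (((k:ℝ)+1)*θ) + t * Real.sin ((k:ℝ)*θ) := by
  rw [hV]
  have hite : (if k = 0 then (0:ℝ) else (U ℝ ((k:ℤ) - 1)).eval (Real.cos θ))
      = (U ℝ ((k:ℤ) - 1)).eval (Real.cos θ) := by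
    split_ifs with h
    · subst h
      norm_num [Polynomial.Chebyshev.U_neg_one]
    · rfl
  rw [hite, add_mul, mul_assoc, U_real_cos θ k, U_real_cos θ ((k:ℤ)-1)]
  push_cast
  ring_nf

end ChebyshevMPAux

open ChebyshevMPAux

/-- The polynomials `V_{n,s} = U_n + √s·U_{n−1}` (with `U_{−1} ≡ 0`) are orthogonal
with respect to the Marchenko–Pastur-type measure with density
`(2/π)·√(1−x²)/((1+s)+2√s·x)` on `[-1,1]`. -/
theorem chebyshevV_orthogonal_MP (s : ℝ) (hs0 : 0 ≤ s) (hs1 : s ≤ 1)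
    (V : ℕ → ℝ → ℝ)
    (hV : ∀ n x, V n x =
      (U ℝ n).eval x + Real.sqrt s * (if n = 0 then 0 else (U ℝ ((n : ℤ) - 1)).eval x))
    (n n' : ℕ) (hnn' : n ≠ n') :
    ∫ x in (-1 : ℝ)..1,
        V n x * V n' x *
          ((2 / Real.pi) * (Real.sqrt (1 - x ^ 2) / ((1 + s) + 2 * Real.sqrt s * x)))
      = 0 := by
  obtain ⟨t, ht0, ht1, hsq, rfl⟩ :
      ∃ t : ℝ, 0 ≤ t ∧ t ≤ 1 ∧ Real.sqrt s = t ∧ s = t^2 :=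
    ⟨Real.sqrt s, Real.sqrt_nonneg s, Real.sqrt_le_one.mpr hs1, rfl, (Real.sq_sqrt hs0).symm⟩
  simp only [hsq] at hV ⊢
  set a : ℝ := (n : ℝ) with ha
  set b : ℝ := (n' : ℝ) with hb
  have hVs := Vsin t V hV
  -- substitution x = cos θ
  rw [subst_cos (fun x => V n x * V n' x *
      ((2 / Real.pi) * (Real.sqrt (1 - x ^ 2) / ((1 + t^2) + 2 * t * x))))]
  rw [intervalIntegral.integral_of_le Real.pi_pos.le, MeasureTheory.integral_Ioc_eq_integral_Ioo]
  -- useful facts on Ioo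
  have hDpos : ∀ θ ∈ Set.Ioo (0:ℝ) π, 0 < 1 + t^2 + 2*t*Real.cos θ := by
    intro θ hθ
    have hmem : Real.cos θ ∈ Set.Ioo (-1:ℝ) 1 := cos_image_Ioo ▸ Set.mem_image_of_mem Real.cos hθ
    rcases eq_or_lt_of_le ht0 with h | h
    · rw [← h]; norm_num
    · nlinarith [sq_nonneg (1-t), mul_pos h (by linarith [hmem.1] : (0:ℝ) < 1 + Real.cos θ)]
  have hsqrtsin : ∀ θ ∈ Set.Ioo (0:ℝ) π,
      Real.sqrt (1 - Real.cos θ ^ 2) = Real.sin θ := by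
    intro θ hθ
    have hsθ : 0 < Real.sin θ := Real.sin_pos_of_pos_of_lt_pi hθ.1 hθ.2
    rw [show 1 - Real.cos θ^2 = Real.sin θ^2 by nlinarith [Real.sin_sq_add_cos_sq θ],
      Real.sqrt_sq hsθ.le]
  have hd : a - b = (((n:ℤ) - (n':ℤ) : ℤ) : ℝ) := by push_cast; ring
  have hdne : ((n:ℤ) - (n':ℤ)) ≠ 0 := sub_ne_zero_of_ne (by exact_mod_cast hnn')
  rcases lt_or_eq_of_le ht1 with h1 | h1
  · -- t < 1
    have hcongr : Set.EqOn
        (fun θ => Real.sin θ * ((fun x => V n x * V n' x *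
          ((2 / Real.pi) * (Real.sqrt (1 - x ^ 2) / ((1 + t^2) + 2 * t * x)))) (Real.cos θ)))
        (fun θ => (1/π) * (Real.cos ((a-b)*θ)
          - (Real.cos ((a+b+2)*θ) + 2*t*Real.cos ((a+b+1)*θ) + t^2*Real.cos ((a+b)*θ))
            / (1+t^2+2*t*Real.cos θ)))
        (Set.Ioo 0 π) := by
      intro θ hθ
      have hsθ : 0 < Real.sin θ := Real.sin_pos_of_pos_of_lt_pi hθ.1 hθ.2
      simp only
      rw [hsqrtsin θ hθ]
      exact core t a b θ _ _ hsθ.ne' (hDpos θ hθ).ne' (hVs n θ) (hVs n' θ)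
    rw [MeasureTheory.setIntegral_congr_fun measurableSet_Ioo hcongr]
    rw [← MeasureTheory.integral_Ioc_eq_integral_Ioo,
      ← intervalIntegral.integral_of_le Real.pi_pos.le]
    rw [intervalIntegral.integral_const_mul]
    have hint : ∀ (c:ℝ), IntervalIntegrable
        (fun θ : ℝ => Real.cos (c*θ) / (1 + t^2 + 2*t*Real.cos θ)) volume 0 π :=
      fun c => integrable_cosk_div_D t ht0 h1 c 0 π
    have hsplit : ∀ θ : ℝ,
        (Real.cos ((a+b+2)*θ) + 2*t*Real.cos ((a+b+1)*θ) + t^2*Real.cos ((a+b)*θ))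
          / (1+t^2+2*t*Real.cos θ)
        = Real.cos ((a+b+2)*θ) / (1+t^2+2*t*Real.cos θ)
          + 2*t*(Real.cos ((a+b+1)*θ) / (1+t^2+2*t*Real.cos θ))
          + t^2*(Real.cos ((a+b)*θ) / (1+t^2+2*t*Real.cos θ)) := by
      intro θ
      rw [add_div, add_div, mul_div_assoc, mul_div_assoc]
    rw [intervalIntegral.integral_congr (g := fun θ =>
        Real.cos ((a-b)*θ) - (Real.cos ((a+b+2)*θ) / (1+t^2+2*t*Real.cos θ)
          + 2*t*(Real.cos ((a+b+1)*θ) / (1+t^2+2*t*Real.cos θ))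
          + t^2*(Real.cos ((a+b)*θ) / (1+t^2+2*t*Real.cos θ))))
      (fun θ _ => by rw [hsplit θ])]
    rw [intervalIntegral.integral_sub ((contCos _).intervalIntegrable _ _)
      (((hint _).add ((hint _).const_mul _)).add ((hint _).const_mul _))]
    rw [intervalIntegral.integral_add ((hint _).add ((hint _).const_mul _)) ((hint _).const_mul _)]
    rw [intervalIntegral.integral_add (hint _) ((hint _).const_mul _)]
    rw [intervalIntegral.integral_const_mul, intervalIntegral.integral_const_mul]
    rw [hd, integral_cos_int _ hdne]
    have e2 : a+b+2 = ((n+n'+2 : ℕ) : ℝ) := by push_cast; ring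
    have e1 : a+b+1 = ((n+n'+1 : ℕ) : ℝ) := by push_cast; ring
    have e0 : a+b = ((n+n' : ℕ) : ℝ) := by push_cast; ring
    rw [e2, e1, e0, Ik t ht0 h1 (n+n'+2), Ik t ht0 h1 (n+n'+1), Ik t ht0 h1 (n+n')]
    have h1t : (1:ℝ) - t^2 ≠ 0 := by nlinarith
    rw [pow_succ, pow_succ]
    field_simp
    ring
  · -- t = 1
    subst h1
    have hcongr : Set.EqOn
        (fun θ => Real.sin θ * ((fun x => V n x * V n' x *
          ((2 / Real.pi) * (Real.sqrt (1 - x ^ 2) / ((1 + (1:ℝ)^2) + 2 * 1 * x)))) (Real.cos θ)))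
        (fun θ => (1/π) * (Real.cos ((a-b)*θ) - Real.cos ((a+b+1)*θ)))
        (Set.Ioo 0 π) := by
      intro θ hθ
      have hsθ : 0 < Real.sin θ := Real.sin_pos_of_pos_of_lt_pi hθ.1 hθ.2
      have hD := hDpos θ hθ
      simp only
      rw [hsqrtsin θ hθ]
      rw [core 1 a b θ _ _ hsθ.ne' hD.ne' (hVs n θ) (hVs n' θ)]
      have hN : Real.cos ((a+b+2)*θ) + 2*1*Real.cos ((a+b+1)*θ) + (1:ℝ)^2*Real.cos ((a+b)*θ)
          = Real.cos ((a+b+1)*θ) * (1+(1:ℝ)^2+2*1*Real.cos θ) := by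
        rw [show (a+b+2)*θ = (a+b+1)*θ + θ by ring, show (a+b)*θ = (a+b+1)*θ - θ by ring,
          Real.cos_add, Real.cos_sub]
        ring
      rw [hN, mul_div_assoc, div_self hD.ne', mul_one]
    rw [MeasureTheory.setIntegral_congr_fun measurableSet_Ioo hcongr]
    rw [← MeasureTheory.integral_Ioc_eq_integral_Ioo,
      ← intervalIntegral.integral_of_le Real.pi_pos.le]
    rw [intervalIntegral.integral_const_mul]
    rw [intervalIntegral.integral_sub ((contCos _).intervalIntegrable _ _)
      ((contCos _).intervalIntegrable _ _)]
    rw [hd, integral_cos_int _ hdne]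
    rw [show a+b+1 = (((n+n'+1 : ℕ) : ℤ) : ℝ) by push_cast; ring,
      integral_cos_int _ (by positivity)]
    simp
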